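/- Let Φ be an M×N random matrix whose entries are ε-biased ±1/√M Bernoulli random variables, and fix disjoint I, J ⊆ {1,…,N} with |I|,|J| ≤ K. Then for any θ > 0 and any even positive integer q, Pr[|⟨∑_{i∈I} φ_i, ∑_{j∈J} φ_j⟩| > θ(|I||J|)^{1/2}] ≤ (q−1)!!(M+q−2)!!/((Mθ)^q (M−2)!!) + ε (|I||J|)^{q/2}/θ^q, for M even. -/

import Mathlib

open Finset
open scoped Nat

namespace BFRO

variable {κ V : Type*} [DecidableEq κ] [Fintype κ] [DecidableEq V]

/-- fixed-point-free involution on `s`, identity off `s`, compatible with `h`. -/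
def InvolOn (s : Finset κ) (h : κ → V) (σ : κ → κ) : Prop :=
  (∀ k ∈ s, σ k ∈ s ∧ σ (σ k) = k ∧ σ k ≠ k ∧ h (σ k) = h k) ∧ ∀ k ∉ s, σ k = k

instance (s : Finset κ) (h : κ → V) : DecidablePred (InvolOn s h) := fun σ => by
  unfold InvolOn; infer_instance

lemma exists_invol (h : κ → V) (s : Finset κ)
    (he : ∀ v, Even (s.filter fun k => h k = v).card) : ∃ σ, InvolOn s h σ := by
  induction s using Finset.strongInduction with
  | _ s ih =>
  rcases s.eq_empty_or_nonempty with rfl | ⟨b, hb⟩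
  · exact ⟨id, fun k hk => absurd hk (notMem_empty k), fun _ _ => rfl⟩
  · have hbf : b ∈ s.filter fun k => h k = h b := mem_filter.2 ⟨hb, rfl⟩
    have hcard : 2 ≤ (s.filter fun k => h k = h b).card := by
      rcases he (h b) with ⟨c, hc⟩
      have : 0 < (s.filter fun k => h k = h b).card := card_pos.2 ⟨b, hbf⟩
      omega
    obtain ⟨b', hb'mem, hb'ne⟩ : ∃ b' ∈ s.filter (fun k => h k = h b), b' ≠ b := by
      have : ((s.filter fun k => h k = h b).erase b).Nonempty := by
        rw [← card_pos, card_erase_of_mem hbf]; omega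
      obtain ⟨b', hb'⟩ := this
      exact ⟨b', mem_of_mem_erase hb', ne_of_mem_erase hb'⟩
    have hb's : b' ∈ s := (mem_filter.1 hb'mem).1
    have hhb' : h b' = h b := (mem_filter.1 hb'mem).2
    set s' := (s.erase b).erase b' with hs'
    have hss : s' ⊂ s := by
      refine Finset.ssubset_of_subset_of_ssubset (erase_subset _ _) (erase_ssubset hb)
    have hfib : ∀ v, (s'.filter fun k => h k = v) =
        (((s.filter fun k => h k = v)).erase b).erase b' := by
      intro v; rw [hs', filter_erase, filter_erase]
    have he' : ∀ v, Even (s'.filter fun k => h k = v).card := by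
      intro v; rw [hfib]
      by_cases hv : v = h b
      · subst hv
        have h1 : b' ∈ (s.filter fun k => h k = h b).erase b := mem_erase.2 ⟨hb'ne, hb'mem⟩
        rw [card_erase_of_mem h1, card_erase_of_mem hbf]
        rcases he (h b) with ⟨c, hc⟩
        exact ⟨c - 1, by omega⟩
      · have h1 : b ∉ s.filter fun k => h k = v := by
          simp only [mem_filter]; rintro ⟨-, h2⟩; exact hv h2.symm
        have h2 : b' ∉ (s.filter fun k => h k = v).erase b := by
          simp only [mem_erase, mem_filter]; rintro ⟨-, -, h3⟩; rw [hhb'] at h3; exact hv h3.symm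
        rw [erase_eq_of_notMem h2, erase_eq_of_notMem h1]; exact he v
    obtain ⟨σ', hσ'⟩ := ih s' hss he'
    set σ : κ → κ := fun k => if k = b then b' else if k = b' then b else σ' k with hσdef
    have hval : ∀ x, σ x = if x = b then b' else if x = b' then b else σ' x := fun x => rfl
    refine ⟨σ, ?_, ?_⟩
    · intro k hk
      by_cases hkb : k = b
      · have h1 : σ k = b' := by rw [hval, if_pos hkb]
        have h2 : σ b' = k := by rw [hval, if_neg hb'ne, if_pos rfl, hkb]
        rw [h1, h2]
        exact ⟨hb's, rfl, fun hc => hb'ne (hc.trans hkb), by rw [hkb]; exact hhb'⟩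
      · by_cases hkb' : k = b'
        · have h1 : σ k = b := by rw [hval, if_neg hkb, if_pos hkb']
          have h2 : σ b = k := by rw [hval, if_pos rfl, hkb']
          rw [h1, h2]
          refine ⟨hb, rfl, fun hc => hkb hc.symm, ?_⟩
          rw [hkb']; exact hhb'.symm
        · have hks' : k ∈ s' := by
            rw [hs']; exact mem_erase.2 ⟨hkb', mem_erase.2 ⟨hkb, hk⟩⟩
          obtain ⟨hm, hii, hne, hcomp⟩ := hσ'.1 k hks'
          have hmb : σ' k ≠ b := fun hc => by
            have := mem_erase.1 (mem_erase.1 hm).2; exact this.1 hc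
          have hmb' : σ' k ≠ b' := fun hc => (mem_erase.1 hm).1 hc
          have h1 : σ k = σ' k := by rw [hval, if_neg hkb, if_neg hkb']
          have h2 : σ (σ' k) = σ' (σ' k) := by rw [hval, if_neg hmb, if_neg hmb']
          rw [h1, h2, hii]
          exact ⟨mem_of_mem_erase (mem_of_mem_erase hm), rfl, hne, hcomp⟩
    · intro k hk
      have hkb : k ≠ b := fun hc => hk (hc ▸ hb)
      have hkb' : k ≠ b' := fun hc => hk (hc ▸ hb's)
      rw [hval, if_neg hkb, if_neg hkb']
      exact hσ'.2 k (fun hc => hk (mem_of_mem_erase (mem_of_mem_erase hc)))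

lemma dfact_step (c : ℕ) : (c - 1) * (c - 2 - 1).doubleFactorial ≤ (c - 1).doubleFactorial := by
  match c with
  | 0 => decide
  | 1 => decide
  | 2 => decide
  | (n+3) => exact le_of_eq (Nat.doubleFactorial_add_two n).symm


lemma card_invol_le [Fintype V] (h : κ → V) (s : Finset κ) :
    ((univ : Finset (κ → κ)).filter (InvolOn s h)).card ≤
      ∏ v : V, ((s.filter fun k => h k = v).card - 1)‼ := by
  induction s using Finset.strongInduction with
  | _ s ih =>
  rcases s.eq_empty_or_nonempty with rfl | ⟨b, hb⟩
  · have h1 : ((univ : Finset (κ → κ)).filter (InvolOn ∅ h)).card ≤ 1 := by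
      rw [card_le_one]
      intro σ1 h1 σ2 h2
      funext k
      rw [(mem_filter.1 h1).2.2 k (notMem_empty k), (mem_filter.1 h2).2.2 k (notMem_empty k)]
    refine h1.trans ?_
    simp [filter_empty]
  · have hbf : b ∈ s.filter fun k => h k = h b := mem_filter.2 ⟨hb, rfl⟩
    set c := (s.filter fun k => h k = h b).card with hc
    have hc1 : 1 ≤ c := card_pos.2 ⟨b, hbf⟩
    set t := (s.filter fun k => h k = h b).erase b with ht
    have htcard : t.card = c - 1 := card_erase_of_mem hbf
    set A := (univ : Finset (κ → κ)).filter (InvolOn s h) with hA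
    have step1 : A.card = ∑ b' ∈ t, (A.filter fun σ => σ b = b').card := by
      refine card_eq_sum_card_fiberwise ?_
      intro σ hσ
      obtain ⟨hm, -, hne, hcomp⟩ := (mem_filter.1 hσ).2.1 b hb
      exact mem_erase.2 ⟨hne, mem_filter.2 ⟨hm, hcomp⟩⟩
    set P := ∏ v ∈ (univ : Finset V).erase (h b), ((s.filter fun k => h k = v).card - 1)‼ with hP
    have goalsplit : ∏ v : V, ((s.filter fun k => h k = v).card - 1)‼ = (c - 1)‼ * P := by
      rw [hP, ← Finset.mul_prod_erase univ _ (mem_univ (h b))]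
    have step2 : ∀ b' ∈ t, (A.filter fun σ => σ b = b').card ≤ (c - 2 - 1)‼ * P := by
      intro b' hb't
      have hb'ne : b' ≠ b := (mem_erase.1 hb't).1
      have hb's : b' ∈ s := (mem_filter.1 (mem_erase.1 hb't).2).1
      have hhb' : h b' = h b := (mem_filter.1 (mem_erase.1 hb't).2).2
      set s'' := (s.erase b).erase b' with hs''
      have hsub : s'' ⊂ s :=
        Finset.ssubset_of_subset_of_ssubset (erase_subset _ _) (erase_ssubset hb)
      have hinj : (A.filter fun σ => σ b = b').card ≤
          ((univ : Finset (κ → κ)).filter (InvolOn s'' h)).card := by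
        refine card_le_card_of_injOn (fun σ => fun k => if k = b ∨ k = b' then k else σ k) ?_ ?_
        · intro σ hσ
          obtain ⟨hAσ, hσb⟩ := mem_filter.1 hσ
          have hinv := (mem_filter.1 hAσ).2
          refine mem_filter.2 ⟨mem_univ _, ?_, ?_⟩
          · intro k hk
            beta_reduce
            have hkb' : k ≠ b' := (mem_erase.1 hk).1
            have hkb : k ≠ b := (mem_erase.1 (mem_erase.1 hk).2).1
            have hks : k ∈ s := mem_of_mem_erase (mem_of_mem_erase hk)
            obtain ⟨hm, hii, hne, hcomp⟩ := hinv.1 k hks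
            have hσkb : σ k ≠ b := by
              intro hcon
              have : k = σ b := by rw [← hcon, hii]
              rw [hσb] at this; exact hkb' this
            have hσkb' : σ k ≠ b' := by
              intro hcon
              have hσb' : σ b' = b := by rw [← hσb, (hinv.1 b hb).2.1]
              have : k = b := by rw [← hii, hcon, hσb']
              exact hkb this
            have e1 : (if k = b ∨ k = b' then k else σ k) = σ k := by
              rw [if_neg]; rintro (h1 | h1); exacts [hkb h1, hkb' h1]
            have e2 : (if σ k = b ∨ σ k = b' then σ k else σ (σ k)) = σ (σ k) := by
              rw [if_neg]; rintro (h1 | h1); exacts [hσkb h1, hσkb' h1]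
            rw [e1, e2, hii]
            exact ⟨mem_erase.2 ⟨hσkb', mem_erase.2 ⟨hσkb, hm⟩⟩, rfl, hne, hcomp⟩
          · intro k hk
            beta_reduce
            by_cases hor : k = b ∨ k = b'
            · rw [if_pos hor]
            · rw [if_neg hor]
              push_neg at hor
              refine hinv.2 k ?_
              intro hks
              exact hk (mem_erase.2 ⟨hor.2, mem_erase.2 ⟨hor.1, hks⟩⟩)
        · intro σ1 hσ1 σ2 hσ2 hF
          have hσ1b : σ1 b = b' := (mem_filter.1 (mem_coe.1 hσ1)).2
          have hσ2b : σ2 b = b' := (mem_filter.1 (mem_coe.1 hσ2)).2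
          have hi1 := (mem_filter.1 (mem_filter.1 (mem_coe.1 hσ1)).1).2
          have hi2 := (mem_filter.1 (mem_filter.1 (mem_coe.1 hσ2)).1).2
          funext k
          by_cases hkb : k = b
          · rw [hkb, hσ1b, hσ2b]
          · by_cases hkb' : k = b'
            · have e1 : σ1 b' = b := by rw [← hσ1b, (hi1.1 b hb).2.1]
              have e2 : σ2 b' = b := by rw [← hσ2b, (hi2.1 b hb).2.1]
              rw [hkb', e1, e2]
            · have := congrFun hF k
              simp only [if_neg (show ¬(k = b ∨ k = b') by tauto)] at this
              exact this
      refine hinj.trans ((ih s'' hsub).trans (le_of_eq ?_))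
      rw [← Finset.mul_prod_erase univ _ (mem_univ (h b))]
      congr 1
      · have hfe : s''.filter (fun k => h k = h b) =
            ((s.filter fun k => h k = h b).erase b).erase b' := by
          rw [hs'', filter_erase, filter_erase]
        rw [hfe, card_erase_of_mem (mem_erase.2 ⟨hb'ne, (mem_erase.1 hb't).2⟩),
          card_erase_of_mem hbf, ← hc]
        congr 1
      · refine Finset.prod_congr rfl ?_
        intro v hv
        have hvne : v ≠ h b := (mem_erase.1 hv).1
        have hfe : s''.filter (fun k => h k = v) = s.filter fun k => h k = v := by
          rw [hs'', filter_erase, filter_erase, erase_eq_of_notMem, erase_eq_of_notMem]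
          · simp only [mem_filter, not_and]
            intro _ hcon; exact hvne hcon.symm
          · simp only [mem_erase, mem_filter, not_and]
            intro _ _ hcon; exact hvne (hhb' ▸ hcon.symm)
        rw [hfe]
    calc A.card = ∑ b' ∈ t, (A.filter fun σ => σ b = b').card := step1
      _ ≤ ∑ _b' ∈ t, (c - 2 - 1)‼ * P := Finset.sum_le_sum step2
      _ = (c - 1) * ((c - 2 - 1)‼ * P) := by rw [Finset.sum_const, htcard, smul_eq_mul]
      _ = ((c - 1) * (c - 2 - 1)‼) * P := by ring
      _ ≤ (c - 1)‼ * P := Nat.mul_le_mul_right _ (dfact_step c)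
      _ = ∏ v : V, ((s.filter fun k => h k = v).card - 1)‼ := goalsplit.symm


lemma dfact_odd (c : ℕ) : (2*c+1)‼ = (2*c+1) * (2*c-1)‼ := by
  match c with
  | 0 => decide
  | (c+1) =>
    rw [show 2*(c+1)+1 = (2*c+1)+2 by ring, Nat.doubleFactorial_add_two,
      show 2*(c+1)-1 = 2*c+1 by omega]

lemma S_id {M : ℕ} (d : Fin M) (R : Finset κ) :
    ∑ f ∈ Fintype.piFinset (fun k : κ => if k ∈ R then (univ : Finset (Fin M)) else {d}),
      ∏ v : Fin M, (2 * (R.filter fun k => f k = v).card - 1)‼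
    = ∏ t ∈ Finset.range R.card, (M + 2 * t) := by
  induction R using Finset.cons_induction with
  | empty =>
    simp only [notMem_empty, if_false, filter_empty, card_empty, mul_zero, Nat.zero_sub,
      Nat.doubleFactorial, Finset.prod_const_one, Finset.sum_const, card_empty,
      Finset.range_zero, Finset.prod_empty, smul_eq_mul, mul_one]
    rw [Fintype.card_piFinset]
    simp
  | cons k₀ R hk₀ ih =>
    set G : (κ → Fin M) → ℕ := fun f =>
      ∏ v : Fin M, (2 * ((cons k₀ R hk₀).filter fun k => f k = v).card - 1)‼ with hG
    set small := Fintype.piFinset (fun k : κ => if k ∈ R then (univ : Finset (Fin M)) else {d})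
      with hsmall
    have key : ∑ f ∈ Fintype.piFinset
          (fun k : κ => if k ∈ cons k₀ R hk₀ then (univ : Finset (Fin M)) else {d}), G f
        = ∑ p ∈ (univ : Finset (Fin M)) ×ˢ small, G (Function.update p.2 k₀ p.1) := by
      refine Finset.sum_nbij' (fun f => (f k₀, Function.update f k₀ d))
        (fun p => Function.update p.2 k₀ p.1) ?_ ?_ ?_ ?_ ?_
      · intro f hf
        rw [Fintype.mem_piFinset] at hf
        refine mem_product.2 ⟨mem_univ _, ?_⟩
        rw [hsmall, Fintype.mem_piFinset]
        intro k
        show Function.update f k₀ d k ∈ (if k ∈ R then (univ : Finset (Fin M)) else {d})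
        by_cases hk : k = k₀
        · subst hk
          rw [Function.update_self, if_neg hk₀]
          exact mem_singleton_self d
        · rw [Function.update_of_ne hk]
          have := hf k
          by_cases hkR : k ∈ R
          · rw [if_pos hkR]; exact mem_univ _
          · rw [if_neg hkR]
            rw [if_neg (by rw [mem_cons]; tauto)] at this
            exact this
      · intro p hp
        obtain ⟨-, hp2⟩ := mem_product.1 hp
        rw [hsmall, Fintype.mem_piFinset] at hp2
        rw [Fintype.mem_piFinset]
        intro k
        show Function.update p.2 k₀ p.1 k ∈ (if k ∈ cons k₀ R hk₀ then (univ : Finset (Fin M)) else {d})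
        by_cases hk : k = k₀
        · subst hk
          rw [Function.update_self, if_pos (mem_cons_self _ _)]
          exact mem_univ _
        · rw [Function.update_of_ne hk]
          have := hp2 k
          by_cases hkR : k ∈ R
          · rw [if_pos hkR] at this
            rw [if_pos (mem_cons.2 (Or.inr hkR))]
            exact mem_univ _
          · rw [if_neg hkR] at this
            rw [if_neg (by rw [mem_cons]; tauto)]
            exact this
      · intro f hf
        simp only [Function.update_idem, Function.update_eq_self]
      · intro p hp
        obtain ⟨-, hp2⟩ := mem_product.1 hp
        rw [hsmall, Fintype.mem_piFinset] at hp2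
        have h2 := hp2 k₀
        rw [if_neg hk₀, mem_singleton] at h2
        show (Function.update p.2 k₀ p.1 k₀, Function.update (Function.update p.2 k₀ p.1) k₀ d) = p
        rw [Function.update_self, Function.update_idem, ← h2, Function.update_eq_self]
      · intro f hf
        rw [Function.update_idem, Function.update_eq_self]
    rw [key, Finset.sum_product]
    have inner : ∀ v0 : Fin M, ∀ f₀ ∈ small, G (Function.update f₀ k₀ v0)
        = (2 * (R.filter fun k => f₀ k = v0).card + 1)
          * ∏ v : Fin M, (2 * (R.filter fun k => f₀ k = v).card - 1)‼ := by
      intro v0 f₀ _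
      have hcard : ∀ v : Fin M, ((cons k₀ R hk₀).filter fun k => Function.update f₀ k₀ v0 k = v).card
          = (R.filter fun k => f₀ k = v).card + if v0 = v then 1 else 0 := by
        intro v
        rw [Finset.filter_cons]
        have hre : (R.filter fun k => Function.update f₀ k₀ v0 k = v)
            = R.filter fun k => f₀ k = v := by
          refine Finset.filter_congr ?_
          intro k hk
          rw [Function.update_of_ne (fun hc => hk₀ (by rw [← hc]; exact hk))]
        by_cases hv : v0 = v
        · rw [if_pos (by rw [Function.update_self]; exact hv), card_cons, hre, if_pos hv]
        · rw [if_neg (by rw [Function.update_self]; exact hv), hre, if_neg hv, add_zero]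
      rw [hG]
      simp only [hcard]
      have hsplit : ∀ v : Fin M,
          (2 * ((R.filter fun k => f₀ k = v).card + if v0 = v then 1 else 0) - 1)‼
          = (if v0 = v then 2 * (R.filter fun k => f₀ k = v).card + 1 else 1)
            * (2 * (R.filter fun k => f₀ k = v).card - 1)‼ := by
        intro v
        by_cases hv : v0 = v
        · rw [if_pos hv, if_pos hv]
          have e : ∀ x : ℕ, 2 * (x + 1) - 1 = 2 * x + 1 := fun x => by rw [Nat.mul_succ]; rfl
          rw [e]
          exact dfact_odd _
        · rw [if_neg hv, if_neg hv, add_zero, one_mul]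
      rw [Finset.prod_congr rfl (fun v _ => hsplit v), Finset.prod_mul_distrib,
        Finset.prod_ite_eq, if_pos (mem_univ v0)]
    calc ∑ v0 : Fin M, ∑ f₀ ∈ small, G (Function.update f₀ k₀ v0)
        = ∑ v0 : Fin M, ∑ f₀ ∈ small, (2 * (R.filter fun k => f₀ k = v0).card + 1)
            * ∏ v : Fin M, (2 * (R.filter fun k => f₀ k = v).card - 1)‼ := by
          refine Finset.sum_congr rfl fun v0 _ => Finset.sum_congr rfl fun f₀ hf₀ => ?_
          exact inner v0 f₀ hf₀
      _ = ∑ f₀ ∈ small, (∑ v0 : Fin M, (2 * (R.filter fun k => f₀ k = v0).card + 1))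
            * ∏ v : Fin M, (2 * (R.filter fun k => f₀ k = v).card - 1)‼ := by
          rw [Finset.sum_comm]
          exact Finset.sum_congr rfl fun f₀ _ => (Finset.sum_mul _ _ _).symm
      _ = ∑ f₀ ∈ small, (M + 2 * R.card)
            * ∏ v : Fin M, (2 * (R.filter fun k => f₀ k = v).card - 1)‼ := by
          refine Finset.sum_congr rfl fun f₀ _ => ?_
          congr 1
          rw [Finset.sum_add_distrib, ← Finset.mul_sum,
            ← card_eq_sum_card_fiberwise (fun k _ => mem_univ (f₀ k))]
          simp [add_comm]
      _ = ∏ t ∈ Finset.range (cons k₀ R hk₀).card, (M + 2 * t) := by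
          rw [← Finset.mul_sum, ih, card_cons, Finset.prod_range_succ]
          ring


variable {q : ℕ}

def FPI (σ : Fin q → Fin q) : Prop := (∀ k, σ (σ k) = k) ∧ ∀ k, σ k ≠ k

def Rset (σ : Fin q → Fin q) : Finset (Fin q) := univ.filter (fun k => k < σ k)

lemma mem_Rset_iff (σ : Fin q → Fin q) (hσ : FPI σ) (k : Fin q) :
    σ k ∈ Rset σ ↔ k ∉ Rset σ := by
  have h1 := hσ.1 k
  have h2 := hσ.2 k
  simp only [Rset, mem_filter, mem_univ, true_and, h1, not_lt]
  constructor
  · exact fun h => le_of_lt h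
  · exact fun h => lt_of_le_of_ne h h2

lemma two_mul_card_Rset (σ : Fin q → Fin q) (hσ : FPI σ) : 2 * (Rset σ).card = q := by
  have hbij : ((univ : Finset (Fin q)).filter (fun k => ¬ k < σ k)).card = (Rset σ).card := by
    apply Finset.card_bij (fun k _ => σ k)
    · intro a ha
      have : a ∉ Rset σ := by
        simp only [Rset, mem_filter, mem_univ, true_and]
        exact (mem_filter.1 ha).2
      exact (mem_Rset_iff σ hσ a).2 this
    · intro a _ b _ hab
      rw [← hσ.1 a, hab, hσ.1 b]
    · intro b hb
      refine ⟨σ b, ?_, hσ.1 b⟩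
      rw [mem_filter]
      refine ⟨mem_univ _, ?_⟩
      have hnot : σ b ∉ Rset σ := by
        rw [mem_Rset_iff σ hσ b, not_not]; exact hb
      simp only [Rset, mem_filter, mem_univ, true_and] at hnot
      exact hnot
  have hsum := Finset.card_filter_add_card_filter_not
      (s := (univ : Finset (Fin q))) (p := fun k => k < σ k)
  rw [card_univ, Fintype.card_fin] at hsum
  have : (Rset σ).card = ((univ : Finset (Fin q)).filter (fun k => k < σ k)).card := rfl
  omega

lemma fiber_card_eq {γ : Type*} [DecidableEq γ] (σ : Fin q → Fin q) (hσ : FPI σ)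
    (g : Fin q → γ) (hg : ∀ k, g (σ k) = g k) (v : γ) :
    ((univ : Finset (Fin q)).filter fun k => g k = v).card
      = 2 * ((Rset σ).filter fun k => g k = v).card := by
  have hsplit := Finset.card_filter_add_card_filter_not
      (s := (univ : Finset (Fin q)).filter fun k => g k = v) (p := fun k => k ∈ Rset σ)
  have e1 : (((univ : Finset (Fin q)).filter fun k => g k = v).filter fun k => k ∈ Rset σ)
      = (Rset σ).filter (fun k => g k = v) := by
    ext k
    simp only [mem_filter, mem_univ, true_and]
    tauto
  have e2 : ((((univ : Finset (Fin q)).filter fun k => g k = v).filter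
        fun k => k ∉ Rset σ)).card = ((Rset σ).filter (fun k => g k = v)).card := by
    apply Finset.card_bij (fun k _ => σ k)
    · intro a ha
      simp only [mem_filter, mem_univ, true_and] at ha
      refine mem_filter.2 ⟨(mem_Rset_iff σ hσ a).2 ha.2, ?_⟩
      rw [hg a]; exact ha.1
    · intro a _ b _ hab
      rw [← hσ.1 a, hab, hσ.1 b]
    · intro b hb
      obtain ⟨hbR, hbg⟩ := mem_filter.1 hb
      refine ⟨σ b, ?_, hσ.1 b⟩
      simp only [mem_filter, mem_univ, true_and]
      constructor
      · rw [hg b]; exact hbg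
      · rw [mem_Rset_iff σ hσ b, not_not]; exact hbR
  rw [e1] at hsplit
  rw [e2] at hsplit
  omega

lemma sum_invariant {M : ℕ} (d : Fin M) (σ : Fin q → Fin q) (hσ : FPI σ)
    (G : (Fin q → Fin M) → ℕ) :
    ∑ m ∈ (Fintype.piFinset fun _ : Fin q => (univ : Finset (Fin M))).filter
        (fun m => ∀ k, m (σ k) = m k), G m
    = ∑ f ∈ Fintype.piFinset
        (fun k : Fin q => if k ∈ Rset σ then (univ : Finset (Fin M)) else {d}),
        G (fun k => if k ∈ Rset σ then f k else f (σ k)) := by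
  refine Finset.sum_nbij' (fun m => fun k => if k ∈ Rset σ then m k else d)
    (fun f => fun k => if k ∈ Rset σ then f k else f (σ k)) ?_ ?_ ?_ ?_ ?_
  · intro m _
    rw [Fintype.mem_piFinset]
    intro k
    show (if k ∈ Rset σ then m k else d) ∈ (if k ∈ Rset σ then (univ : Finset (Fin M)) else {d})
    by_cases hk : k ∈ Rset σ
    · rw [if_pos hk, if_pos hk]; exact mem_univ _
    · rw [if_neg hk, if_neg hk]; exact mem_singleton_self d
  · intro f _
    refine mem_filter.2 ⟨by rw [Fintype.mem_piFinset]; exact fun k => mem_univ _, ?_⟩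
    intro k
    show (if σ k ∈ Rset σ then f (σ k) else f (σ (σ k)))
        = (if k ∈ Rset σ then f k else f (σ k))
    by_cases hk : k ∈ Rset σ
    · rw [if_neg (by rw [mem_Rset_iff σ hσ]; exact fun h => h hk), hσ.1 k, if_pos hk]
    · rw [if_pos ((mem_Rset_iff σ hσ k).2 hk), if_neg hk]
  · intro m hm
    have hinv := (mem_filter.1 hm).2
    funext k
    show (if k ∈ Rset σ then (if k ∈ Rset σ then m k else d)
        else (if σ k ∈ Rset σ then m (σ k) else d)) = m k
    by_cases hk : k ∈ Rset σ
    · rw [if_pos hk, if_pos hk]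
    · rw [if_neg hk, if_pos ((mem_Rset_iff σ hσ k).2 hk), hinv k]
  · intro f hf
    rw [Fintype.mem_piFinset] at hf
    funext k
    show (if k ∈ Rset σ then (if k ∈ Rset σ then f k else f (σ k)) else d) = f k
    by_cases hk : k ∈ Rset σ
    · rw [if_pos hk, if_pos hk]
    · rw [if_neg hk]
      have := hf k
      rw [if_neg hk, mem_singleton] at this
      exact this.symm
  · intro m hm
    have hinv := (mem_filter.1 hm).2
    congr 1
    funext k
    show m k = (if k ∈ Rset σ then (if k ∈ Rset σ then m k else d)
        else (if σ k ∈ Rset σ then m (σ k) else d))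
    by_cases hk : k ∈ Rset σ
    · rw [if_pos hk, if_pos hk]
    · rw [if_neg hk, if_pos ((mem_Rset_iff σ hσ k).2 hk), hinv k]

lemma sum_weights {M : ℕ} (hM : 0 < M) (σ : Fin q → Fin q) (hσ : FPI σ) :
    ∑ m ∈ (Fintype.piFinset fun _ : Fin q => (univ : Finset (Fin M))).filter
        (fun m => ∀ k, m (σ k) = m k),
      ∏ v : Fin M, (((univ : Finset (Fin q)).filter fun k => m k = v).card - 1)‼
    = ∏ t ∈ Finset.range (Rset σ).card, (M + 2 * t) := by
  rw [sum_invariant ⟨0, hM⟩ σ hσ, ← S_id ⟨0, hM⟩ (Rset σ)]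
  refine Finset.sum_congr rfl fun f hf => Finset.prod_congr rfl fun v _ => ?_
  set m : Fin q → Fin M := fun k => if k ∈ Rset σ then f k else f (σ k) with hmdef
  have hminv : ∀ k, m (σ k) = m k := by
    intro k
    show (if σ k ∈ Rset σ then f (σ k) else f (σ (σ k))) = (if k ∈ Rset σ then f k else f (σ k))
    by_cases hk : k ∈ Rset σ
    · rw [if_neg (by rw [mem_Rset_iff σ hσ]; exact fun h => h hk), hσ.1 k, if_pos hk]
    · rw [if_pos ((mem_Rset_iff σ hσ k).2 hk), if_neg hk]
  have hfe : (Rset σ).filter (fun k => m k = v) = (Rset σ).filter (fun k => f k = v) := by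
    refine Finset.filter_congr ?_
    intro k hk
    show ((if k ∈ Rset σ then f k else f (σ k)) = v) ↔ f k = v
    rw [if_pos hk]
  rw [fiber_card_eq σ hσ m hminv v, hfe]


lemma involOn_univ_iff {V : Type*} [DecidableEq V] (h : Fin q → V) (σ : Fin q → Fin q) :
    InvolOn univ h σ ↔ FPI σ ∧ ∀ k, h (σ k) = h k := by
  constructor
  · rintro ⟨h1, -⟩
    exact ⟨⟨fun k => (h1 k (mem_univ k)).2.1, fun k => (h1 k (mem_univ k)).2.2.1⟩,
      fun k => (h1 k (mem_univ k)).2.2.2⟩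
  · rintro ⟨⟨h1, h2⟩, h3⟩
    exact ⟨fun k _ => ⟨mem_univ _, h1 k, h2 k, h3 k⟩, fun k hk => absurd (mem_univ k) hk⟩

/-- the set of fixed-point-free involutions of `Fin q` -/
def FPIs (q : ℕ) : Finset (Fin q → Fin q) :=
  univ.filter (fun σ => InvolOn univ (fun _ => (0 : Fin 1)) σ)

lemma mem_FPIs {σ : Fin q → Fin q} : σ ∈ FPIs q ↔ FPI σ := by
  rw [FPIs, mem_filter, involOn_univ_iff]
  simp

lemma card_FPIs (q : ℕ) : (FPIs q).card ≤ (q - 1)‼ := by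
  refine (card_invol_le (fun _ : Fin q => (0 : Fin 1)) univ).trans (le_of_eq ?_)
  rw [Fin.prod_univ_one]
  congr 2
  rw [Finset.filter_true_of_mem (fun _ _ => Subsingleton.elim _ _), card_univ, Fintype.card_fin]

lemma halfR {σ : Fin q → Fin q} (hσ : FPI σ) : (Rset σ).card = q / 2 := by
  have := two_mul_card_Rset σ hσ
  omega

lemma main_count {Nn M : ℕ} (hM : 0 < M) (I J : Finset (Fin Nn))
    (i₀ : Fin Nn) (hi₀ : i₀ ∈ I) (j₀ : Fin Nn) (hj₀ : j₀ ∈ J) :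
    ((Fintype.piFinset fun _ : Fin q => I ×ˢ J ×ˢ (univ : Finset (Fin M))).filter
      (fun T => (∀ p : Fin M × Fin Nn,
          Even (((univ : Finset (Fin q)).filter fun k => ((T k).2.2, (T k).1) = p).card)) ∧
        (∀ p : Fin M × Fin Nn,
          Even (((univ : Finset (Fin q)).filter fun k => ((T k).2.2, (T k).2.1) = p).card)))).card
    ≤ (q - 1)‼ * (I.card ^ (q / 2) * J.card ^ (q / 2)) *
        ∏ t ∈ Finset.range (q / 2), (M + 2 * t) := by
  classical
  set D := I ×ˢ J ×ˢ (univ : Finset (Fin M)) with hD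
  set PT := Fintype.piFinset fun _ : Fin q => D with hPT
  set Ainv : (Fin q → Fin q) → (Fin q → Fin Nn × Fin Nn × Fin M) → Prop :=
    fun σ T => ∀ k, ((T (σ k)).2.2, (T (σ k)).1) = ((T k).2.2, (T k).1) with hAinv
  set Binv : (Fin q → Fin q) → (Fin q → Fin Nn × Fin Nn × Fin M) → Prop :=
    fun τ T => ∀ k, ((T (τ k)).2.2, (T (τ k)).2.1) = ((T k).2.2, (T k).2.1) with hBinv
  set EvB : (Fin q → Fin Nn × Fin Nn × Fin M) → Prop :=
    fun T => ∀ p : Fin M × Fin Nn,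
      Even (((univ : Finset (Fin q)).filter fun k => ((T k).2.2, (T k).2.1) = p).card) with hEvB
  -- step 1
  have step1 : (PT.filter
      (fun T => (∀ p : Fin M × Fin Nn,
          Even (((univ : Finset (Fin q)).filter fun k => ((T k).2.2, (T k).1) = p).card)) ∧
        EvB T)).card
      ≤ ∑ σ ∈ FPIs q, (PT.filter (fun T => Ainv σ T ∧ EvB T)).card := by
    refine le_trans (card_le_card ?_) (card_biUnion_le)
    intro T hT
    obtain ⟨hTD, hEA, hEB⟩ := mem_filter.1 hT
    obtain ⟨σ, hσ⟩ := exists_invol (fun k => ((T k).2.2, (T k).1)) univ (fun v => hEA v)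
    rw [involOn_univ_iff] at hσ
    rw [mem_biUnion]
    exact ⟨σ, mem_FPIs.2 hσ.1, mem_filter.2 ⟨hTD, hσ.2, hEB⟩⟩
  -- step 2
  have step2 : ∀ σ, (PT.filter (fun T => Ainv σ T ∧ EvB T)).card
      ≤ ∑ τ ∈ FPIs q, (PT.filter (fun T => Ainv σ T ∧ Binv τ T)).card := by
    intro σ
    refine le_trans (card_le_card ?_) (card_biUnion_le)
    intro T hT
    obtain ⟨hTD, hA, hEB⟩ := mem_filter.1 hT
    obtain ⟨τ, hτ⟩ := exists_invol (fun k => ((T k).2.2, (T k).2.1)) univ (fun v => hEB v)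
    rw [involOn_univ_iff] at hτ
    rw [mem_biUnion]
    exact ⟨τ, mem_FPIs.2 hτ.1, mem_filter.2 ⟨hTD, hA, hτ.2⟩⟩
  -- step 3
  have step3 : ∀ σ ∈ FPIs q, ∀ τ ∈ FPIs q,
      (PT.filter (fun T => Ainv σ T ∧ Binv τ T)).card
      ≤ I.card ^ (q / 2) * J.card ^ (q / 2) *
        ((Fintype.piFinset fun _ : Fin q => (univ : Finset (Fin M))).filter
          (fun m => (∀ k, m (σ k) = m k) ∧ (∀ k, m (τ k) = m k))).card := by
    intro σ hσ τ hτ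
    have hσF := mem_FPIs.1 hσ
    have hτF := mem_FPIs.1 hτ
    have hcard : (Fintype.piFinset (fun k : Fin q => if k ∈ Rset σ then I else {i₀}) ×ˢ
        (Fintype.piFinset (fun k : Fin q => if k ∈ Rset τ then J else {j₀}) ×ˢ
        ((Fintype.piFinset fun _ : Fin q => (univ : Finset (Fin M))).filter
          (fun m => (∀ k, m (σ k) = m k) ∧ (∀ k, m (τ k) = m k))))).card
        = I.card ^ (q / 2) * J.card ^ (q / 2) *
          ((Fintype.piFinset fun _ : Fin q => (univ : Finset (Fin M))).filter
          (fun m => (∀ k, m (σ k) = m k) ∧ (∀ k, m (τ k) = m k))).card := by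
      rw [card_product, card_product, Fintype.card_piFinset, Fintype.card_piFinset]
      have e1 : ∏ k : Fin q, (if k ∈ Rset σ then I else {i₀}).card = I.card ^ (q / 2) := by
        calc ∏ k : Fin q, (if k ∈ Rset σ then I else {i₀}).card
            = ∏ k : Fin q, (if k ∈ Rset σ then I.card else 1) := by
              refine Finset.prod_congr rfl fun k _ => ?_
              by_cases hk : k ∈ Rset σ
              · rw [if_pos hk, if_pos hk]
              · rw [if_neg hk, if_neg hk, card_singleton]
          _ = I.card ^ (Rset σ).card := by
              rw [Finset.prod_ite_mem, univ_inter, Finset.prod_const]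
          _ = I.card ^ (q / 2) := by rw [halfR hσF]
      have e2 : ∏ k : Fin q, (if k ∈ Rset τ then J else {j₀}).card = J.card ^ (q / 2) := by
        calc ∏ k : Fin q, (if k ∈ Rset τ then J else {j₀}).card
            = ∏ k : Fin q, (if k ∈ Rset τ then J.card else 1) := by
              refine Finset.prod_congr rfl fun k _ => ?_
              by_cases hk : k ∈ Rset τ
              · rw [if_pos hk, if_pos hk]
              · rw [if_neg hk, if_neg hk, card_singleton]
          _ = J.card ^ (Rset τ).card := by
              rw [Finset.prod_ite_mem, univ_inter, Finset.prod_const]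
          _ = J.card ^ (q / 2) := by rw [halfR hτF]
      rw [e1, e2, mul_assoc]
    rw [← hcard]
    refine card_le_card_of_injOn (fun T =>
      ((fun k => if k ∈ Rset σ then (T k).1 else i₀),
       ((fun k => if k ∈ Rset τ then (T k).2.1 else j₀),
        (fun k => (T k).2.2)))) ?_ ?_
    · intro T hT
      obtain ⟨hTD, hA, hB⟩ := mem_filter.1 hT
      rw [hPT, Fintype.mem_piFinset] at hTD
      refine mem_product.2 ⟨?_, mem_product.2 ⟨?_, ?_⟩⟩
      · rw [Fintype.mem_piFinset]
        intro k
        show (if k ∈ Rset σ then (T k).1 else i₀) ∈ (if k ∈ Rset σ then I else {i₀})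
        by_cases hk : k ∈ Rset σ
        · rw [if_pos hk, if_pos hk]
          exact (mem_product.1 (hTD k)).1
        · rw [if_neg hk, if_neg hk]; exact mem_singleton_self _
      · rw [Fintype.mem_piFinset]
        intro k
        show (if k ∈ Rset τ then (T k).2.1 else j₀) ∈ (if k ∈ Rset τ then J else {j₀})
        by_cases hk : k ∈ Rset τ
        · rw [if_pos hk, if_pos hk]
          exact (mem_product.1 (mem_product.1 (hTD k)).2).1
        · rw [if_neg hk, if_neg hk]; exact mem_singleton_self _
      · refine mem_filter.2 ⟨by rw [Fintype.mem_piFinset]; exact fun k => mem_univ _, ?_, ?_⟩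
        · intro k
          exact congrArg Prod.fst (hA k)
        · intro k
          exact congrArg Prod.fst (hB k)
    · intro T1 hT1 T2 hT2 hF
      simp only [mem_coe, mem_filter] at hT1 hT2
      obtain ⟨hT1D, hA1, hB1⟩ := hT1
      obtain ⟨hT2D, hA2, hB2⟩ := hT2
      have hFi := congrArg Prod.fst hF
      have hFj := congrArg (fun p => p.2.1) hF
      have hFm := congrArg (fun p => p.2.2) hF
      simp only at hFi hFj hFm
      funext k
      have hm : (T1 k).2.2 = (T2 k).2.2 := congrFun hFm k
      have hi : (T1 k).1 = (T2 k).1 := by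
        by_cases hk : k ∈ Rset σ
        · have := congrFun hFi k
          simp only [if_pos hk] at this
          exact this
        · have hσk : σ k ∈ Rset σ := (mem_Rset_iff σ (mem_FPIs.1 hσ) k).2 hk
          have e1 : (T1 (σ k)).1 = (T1 k).1 := congrArg Prod.snd (hA1 k)
          have e2 : (T2 (σ k)).1 = (T2 k).1 := congrArg Prod.snd (hA2 k)
          have := congrFun hFi (σ k)
          simp only [if_pos hσk] at this
          rw [← e1, ← e2, this]
      have hj : (T1 k).2.1 = (T2 k).2.1 := by
        by_cases hk : k ∈ Rset τ
        · have := congrFun hFj k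
          simp only [if_pos hk] at this
          exact this
        · have hτk : τ k ∈ Rset τ := (mem_Rset_iff τ (mem_FPIs.1 hτ) k).2 hk
          have e1 : (T1 (τ k)).2.1 = (T1 k).2.1 := congrArg Prod.snd (hB1 k)
          have e2 : (T2 (τ k)).2.1 = (T2 k).2.1 := congrArg Prod.snd (hB2 k)
          have := congrFun hFj (τ k)
          simp only [if_pos hτk] at this
          rw [← e1, ← e2, this]
      exact Prod.ext hi (Prod.ext hj hm)
  -- step 4
  have step4 : ∀ σ ∈ FPIs q,
      ∑ τ ∈ FPIs q, ((Fintype.piFinset fun _ : Fin q => (univ : Finset (Fin M))).filter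
          (fun m => (∀ k, m (σ k) = m k) ∧ (∀ k, m (τ k) = m k))).card
      ≤ ∏ t ∈ Finset.range (q / 2), (M + 2 * t) := by
    intro σ hσ
    have hσF := mem_FPIs.1 hσ
    have swap : ∑ τ ∈ FPIs q, ((Fintype.piFinset fun _ : Fin q => (univ : Finset (Fin M))).filter
          (fun m => (∀ k, m (σ k) = m k) ∧ (∀ k, m (τ k) = m k))).card
        = ∑ m ∈ (Fintype.piFinset fun _ : Fin q => (univ : Finset (Fin M))).filter
            (fun m => ∀ k, m (σ k) = m k),
            ((FPIs q).filter (fun τ => ∀ k, m (τ k) = m k)).card := by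
      simp only [Finset.card_filter]
      rw [Finset.sum_comm]
      rw [Finset.sum_filter]
      refine Finset.sum_congr rfl fun m _ => ?_
      by_cases hm : ∀ k, m (σ k) = m k
      · rw [if_pos hm]
        refine Finset.sum_congr rfl fun τ _ => ?_
        by_cases hmt : ∀ k, m (τ k) = m k
        · rw [if_pos hmt, if_pos ⟨hm, hmt⟩]
        · rw [if_neg hmt, if_neg (fun hc => hmt hc.2)]
      · rw [if_neg hm]
        refine (Finset.sum_eq_zero fun τ _ => ?_)
        rw [if_neg (fun hc => hm hc.1)]
    rw [swap]
    have bound : ∀ m : Fin q → Fin M,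
        ((FPIs q).filter (fun τ => ∀ k, m (τ k) = m k)).card
        ≤ ∏ v : Fin M, (((univ : Finset (Fin q)).filter fun k => m k = v).card - 1)‼ := by
      intro m
      have he : (FPIs q).filter (fun τ => ∀ k, m (τ k) = m k)
          = univ.filter (InvolOn univ m) := by
        ext τ
        rw [mem_filter, mem_filter, involOn_univ_iff, FPIs, mem_filter, involOn_univ_iff]
        simp only [mem_univ, true_and]
        tauto
      rw [he]
      exact card_invol_le m univ
    calc ∑ m ∈ (Fintype.piFinset fun _ : Fin q => (univ : Finset (Fin M))).filter
          (fun m => ∀ k, m (σ k) = m k),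
          ((FPIs q).filter (fun τ => ∀ k, m (τ k) = m k)).card
        ≤ ∑ m ∈ (Fintype.piFinset fun _ : Fin q => (univ : Finset (Fin M))).filter
          (fun m => ∀ k, m (σ k) = m k),
          ∏ v : Fin M, (((univ : Finset (Fin q)).filter fun k => m k = v).card - 1)‼ :=
          Finset.sum_le_sum fun m _ => bound m
      _ = ∏ t ∈ Finset.range (Rset σ).card, (M + 2 * t) := sum_weights hM σ hσF
      _ = ∏ t ∈ Finset.range (q / 2), (M + 2 * t) := by rw [halfR hσF]
  -- combine
  calc (PT.filter
      (fun T => (∀ p : Fin M × Fin Nn,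
          Even (((univ : Finset (Fin q)).filter fun k => ((T k).2.2, (T k).1) = p).card)) ∧
        EvB T)).card
      ≤ ∑ σ ∈ FPIs q, (PT.filter (fun T => Ainv σ T ∧ EvB T)).card := step1
    _ ≤ ∑ σ ∈ FPIs q, ∑ τ ∈ FPIs q, (PT.filter (fun T => Ainv σ T ∧ Binv τ T)).card :=
        Finset.sum_le_sum fun σ _ => step2 σ
    _ ≤ ∑ σ ∈ FPIs q, ∑ τ ∈ FPIs q, I.card ^ (q / 2) * J.card ^ (q / 2) *
          ((Fintype.piFinset fun _ : Fin q => (univ : Finset (Fin M))).filter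
          (fun m => (∀ k, m (σ k) = m k) ∧ (∀ k, m (τ k) = m k))).card :=
        Finset.sum_le_sum fun σ hσ => Finset.sum_le_sum fun τ hτ => step3 σ hσ τ hτ
    _ = ∑ σ ∈ FPIs q, I.card ^ (q / 2) * J.card ^ (q / 2) *
          ∑ τ ∈ FPIs q, ((Fintype.piFinset fun _ : Fin q => (univ : Finset (Fin M))).filter
          (fun m => (∀ k, m (σ k) = m k) ∧ (∀ k, m (τ k) = m k))).card := by
        refine Finset.sum_congr rfl fun σ _ => ?_
        rw [Finset.mul_sum]
    _ ≤ ∑ σ ∈ FPIs q, I.card ^ (q / 2) * J.card ^ (q / 2) *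
          ∏ t ∈ Finset.range (q / 2), (M + 2 * t) :=
        Finset.sum_le_sum fun σ hσ =>
          Nat.mul_le_mul_left _ (step4 σ hσ)
    _ = (FPIs q).card * (I.card ^ (q / 2) * J.card ^ (q / 2) *
          ∏ t ∈ Finset.range (q / 2), (M + 2 * t)) := by
        rw [Finset.sum_const, smul_eq_mul]
    _ ≤ (q - 1)‼ * (I.card ^ (q / 2) * J.card ^ (q / 2) *
          ∏ t ∈ Finset.range (q / 2), (M + 2 * t)) :=
        Nat.mul_le_mul_right _ (card_FPIs q)
    _ = (q - 1)‼ * (I.card ^ (q / 2) * J.card ^ (q / 2)) *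
          ∏ t ∈ Finset.range (q / 2), (M + 2 * t) := by ring


lemma dfact_prod (M : ℕ) (hM2 : 2 ≤ M) (r : ℕ) :
    (M - 2)‼ * ∏ t ∈ Finset.range r, (M + 2 * t) = (M + 2 * r - 2)‼ := by
  induction r with
  | zero => simp
  | succ r ih =>
    rw [Finset.prod_range_succ, ← mul_assoc, ih,
      show M + 2 * (r + 1) - 2 = (M + 2 * r - 2) + 2 by omega, Nat.doubleFactorial_add_two,
      show M + 2 * r - 2 + 2 = M + 2 * r by omega, mul_comm]

end BFRO

open scoped Nat
open MeasureTheory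

theorem biased_fro_probability_bound {Ω : Type*} [MeasurableSpace Ω]
    (μ : Measure Ω) [IsProbabilityMeasure μ]
    (M N K : ℕ) (hM : 0 < M) (hMe : Even M) (ε θ : ℝ) (hθ : 0 < θ)
    (X : Fin M → Fin N → Ω → ℝ)
    (hmeas : ∀ m n, Measurable (X m n))
    (hpm : ∀ m n ω, X m n ω = 1 ∨ X m n ω = -1)
    (hbias : ∀ S : Finset (Fin M × Fin N), S.Nonempty →
      |∫ ω, ∏ p ∈ S, X p.1 p.2 ω ∂μ| ≤ ε)
    (I J : Finset (Fin N)) (hdisj : Disjoint I J) (hI : I.card ≤ K) (hJ : J.card ≤ K)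
    (q : ℕ) (hqe : Even q) (hq : 0 < q) :
    (μ {ω | θ * Real.sqrt ((I.card : ℝ) * J.card) <
        |∑ i ∈ I, ∑ j ∈ J, ∑ m, (X m i ω / Real.sqrt M) * (X m j ω / Real.sqrt M)|}).toReal
      ≤ ((q - 1).doubleFactorial * (M + q - 2).doubleFactorial : ℝ) /
          (((M : ℝ) * θ) ^ q * ((M - 2).doubleFactorial : ℝ))
        + ε * ((I.card : ℝ) * J.card) ^ (q / 2) / θ ^ q := by
  classical
  have hM2 : 2 ≤ M := by
    obtain ⟨c, hc⟩ := hMe; omega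
  have h2r : 2 * (q / 2) = q := by
    obtain ⟨c, hc⟩ := hqe; omega
  set r := q / 2 with hrdef
  have hr1 : 1 ≤ r := by omega
  -- trivial case : I or J empty
  by_cases hIJ : I = ∅ ∨ J = ∅
  · have hzero : ∀ ω, (∑ i ∈ I, ∑ j ∈ J, ∑ m,
        (X m i ω / Real.sqrt M) * (X m j ω / Real.sqrt M)) = 0 := by
      intro ω
      rcases hIJ with h | h
      · rw [h, Finset.sum_empty]
      · rw [h]
        simp
    have hcard0 : ((I.card : ℝ) * J.card) = 0 := by
      rcases hIJ with h | h <;> rw [h] <;> simp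
    have hset : {ω | θ * Real.sqrt ((I.card : ℝ) * J.card) <
        |∑ i ∈ I, ∑ j ∈ J, ∑ m, (X m i ω / Real.sqrt M) * (X m j ω / Real.sqrt M)|}
        = (∅ : Set Ω) := by
      ext ω
      simp only [Set.mem_setOf_eq, hzero ω, abs_zero, Set.mem_empty_iff_false, iff_false,
        not_lt, hcard0, Real.sqrt_zero, mul_zero, le_refl]
    rw [hset]
    simp only [measure_empty, ENNReal.toReal_zero]
    have h1 : (0:ℝ) ≤ ((q - 1).doubleFactorial * (M + q - 2).doubleFactorial : ℝ) /
        (((M : ℝ) * θ) ^ q * ((M - 2).doubleFactorial : ℝ)) := by positivity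
    have h2 : ε * ((I.card : ℝ) * J.card) ^ (q / 2) / θ ^ q = 0 := by
      rw [hcard0, zero_pow (by omega : q / 2 ≠ 0), mul_zero, zero_div]
    linarith
  · push_neg at hIJ
    obtain ⟨hIne, hJne⟩ := hIJ
    obtain ⟨i₀, hi₀⟩ := hIne
    obtain ⟨j₀, hj₀⟩ := hJne
    have hε0 : 0 ≤ ε :=
      le_trans (abs_nonneg _) (hbias {(⟨0, hM⟩, i₀)} (Finset.singleton_nonempty _))
    have hMR : (0:ℝ) < M := by exact_mod_cast hM
    set D := I ×ˢ J ×ˢ (univ : Finset (Fin M)) with hD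
    set PT := Fintype.piFinset fun _ : Fin q => D with hPT
    set Z : Ω → ℝ := fun ω => (∑ e ∈ D, X e.2.2 e.1 ω * X e.2.2 e.2.1 ω) / M with hZ
    have hZeq : ∀ ω, (∑ i ∈ I, ∑ j ∈ J, ∑ m,
        (X m i ω / Real.sqrt M) * (X m j ω / Real.sqrt M)) = Z ω := by
      intro ω
      show _ = (∑ e ∈ D, X e.2.2 e.1 ω * X e.2.2 e.2.1 ω) / M
      have h1 : ∀ (x y : ℝ), (x / Real.sqrt M) * (y / Real.sqrt M) = x * y / M := by
        intro x y
        rw [div_mul_div_comm, Real.mul_self_sqrt (Nat.cast_nonneg M)]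
      calc ∑ i ∈ I, ∑ j ∈ J, ∑ m, (X m i ω / Real.sqrt M) * (X m j ω / Real.sqrt M)
          = ∑ i ∈ I, ∑ j ∈ J, ∑ m, X m i ω * X m j ω / M :=
            Finset.sum_congr rfl fun i _ => Finset.sum_congr rfl fun j _ =>
              Finset.sum_congr rfl fun m _ => h1 _ _
        _ = (∑ i ∈ I, ∑ j ∈ J, ∑ m, X m i ω * X m j ω) / M := by
            simp only [← Finset.sum_div]
        _ = (∑ e ∈ D, X e.2.2 e.1 ω * X e.2.2 e.2.1 ω) / M := by
            congr 1
            rw [hD, Finset.sum_product]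
            refine Finset.sum_congr rfl fun i _ => ?_
            rw [Finset.sum_product]
    have hsetZ : {ω | θ * Real.sqrt ((I.card : ℝ) * J.card) <
        |∑ i ∈ I, ∑ j ∈ J, ∑ m, (X m i ω / Real.sqrt M) * (X m j ω / Real.sqrt M)|}
        = {ω | θ * Real.sqrt ((I.card : ℝ) * J.card) < |Z ω|} := by
      ext ω
      rw [Set.mem_setOf_eq, Set.mem_setOf_eq, hZeq ω]
    rw [hsetZ]
    set t := θ * Real.sqrt ((I.card : ℝ) * J.card) with htdef
    have hab : (0:ℝ) < (I.card : ℝ) * J.card := by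
      have h1 : 0 < I.card := Finset.card_pos.2 ⟨i₀, hi₀⟩
      have h2 : 0 < J.card := Finset.card_pos.2 ⟨j₀, hj₀⟩
      have h1' : (0:ℝ) < I.card := by exact_mod_cast h1
      have h2' : (0:ℝ) < J.card := by exact_mod_cast h2
      exact mul_pos h1' h2'
    have ht : 0 < t := mul_pos hθ (Real.sqrt_pos.2 hab)
    have htq : (0:ℝ) < t ^ q := pow_pos ht q
    -- measurability and integrability
    have hGmeas : ∀ T : Fin q → Fin N × Fin N × Fin M, Measurable (fun ω =>
        ∏ k : Fin q, (X (T k).2.2 (T k).1 ω * X (T k).2.2 (T k).2.1 ω)) := fun T =>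
      Finset.measurable_prod _ (fun k _ => ((hmeas _ _).mul (hmeas _ _)))
    have habs1 : ∀ (m : Fin M) (n : Fin N) ω, |X m n ω| = 1 := by
      intro m n ω
      rcases hpm m n ω with h | h <;> rw [h] <;> norm_num
    have hGabs : ∀ (T : Fin q → Fin N × Fin N × Fin M) (ω : Ω),
        |∏ k : Fin q, (X (T k).2.2 (T k).1 ω * X (T k).2.2 (T k).2.1 ω)| = 1 := by
      intro T ω
      rw [Finset.abs_prod]
      refine Finset.prod_eq_one fun k _ => ?_
      rw [abs_mul, habs1, habs1, mul_one]
    have hGint : ∀ T : Fin q → Fin N × Fin N × Fin M, Integrable (fun ω =>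
        ∏ k : Fin q, (X (T k).2.2 (T k).1 ω * X (T k).2.2 (T k).2.1 ω)) μ := by
      intro T
      refine Integrable.mono' (integrable_const 1) (hGmeas T).aestronglyMeasurable
        (ae_of_all _ fun ω => ?_)
      rw [Real.norm_eq_abs, hGabs T ω]
    have hZq : ∀ ω, Z ω ^ q = (∑ T ∈ PT, ∏ k : Fin q,
        (X (T k).2.2 (T k).1 ω * X (T k).2.2 (T k).2.1 ω)) / (M:ℝ) ^ q := by
      intro ω
      show ((∑ e ∈ D, X e.2.2 e.1 ω * X e.2.2 e.2.1 ω) / M) ^ q = _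
      rw [div_pow, Finset.sum_pow']
    have hZqint : Integrable (fun ω => Z ω ^ q) μ := by
      have he : (fun ω => Z ω ^ q) = fun ω => (∑ T ∈ PT, ∏ k : Fin q,
          (X (T k).2.2 (T k).1 ω * X (T k).2.2 (T k).2.1 ω)) / (M:ℝ) ^ q := funext hZq
      rw [he]
      exact (integrable_finset_sum PT fun T _ => hGint T).div_const _
    have hZqnn : 0 ≤ᵐ[μ] fun ω => Z ω ^ q := ae_of_all _ fun ω => hqe.pow_nonneg _
    -- Markov
    have hsub : {ω | t < |Z ω|} ⊆ {ω | t ^ q ≤ Z ω ^ q} := by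
      intro ω hω
      rw [Set.mem_setOf_eq] at hω ⊢
      calc t ^ q ≤ |Z ω| ^ q := pow_le_pow_left₀ ht.le hω.le q
        _ = Z ω ^ q := hqe.pow_abs _
    have hmark : t ^ q * (μ {ω | t ^ q ≤ Z ω ^ q}).toReal ≤ ∫ ω, Z ω ^ q ∂μ :=
      mul_meas_ge_le_integral_of_nonneg hZqnn hZqint (t ^ q)
    have hμ1 : (μ {ω | t < |Z ω|}).toReal ≤ (μ {ω | t ^ q ≤ Z ω ^ q}).toReal :=
      ENNReal.toReal_mono (measure_ne_top μ _) (measure_mono hsub)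
    have hμ2 : (μ {ω | t ^ q ≤ Z ω ^ q}).toReal ≤ (∫ ω, Z ω ^ q ∂μ) / t ^ q := by
      rw [le_div_iff₀ htq]
      linarith [hmark]
    -- moment computation
    set Ev : (Fin q → Fin N × Fin N × Fin M) → Prop := fun T =>
      (∀ p : Fin M × Fin N,
        Even (((univ : Finset (Fin q)).filter fun k => ((T k).2.2, (T k).1) = p).card)) ∧
      (∀ p : Fin M × Fin N,
        Even (((univ : Finset (Fin q)).filter fun k => ((T k).2.2, (T k).2.1) = p).card))
      with hEv
    set Sodd : (Fin q → Fin N × Fin N × Fin M) → Finset (Fin M × Fin N) := fun T =>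
      univ.filter (fun p => ¬ Even ((((univ : Finset (Fin q)).filter
          fun k => ((T k).2.2, (T k).1) = p).card) +
        (((univ : Finset (Fin q)).filter fun k => ((T k).2.2, (T k).2.1) = p).card)))
      with hSodd
    have hkey : ∀ (T : Fin q → Fin N × Fin N × Fin M) (ω : Ω),
        ∏ k : Fin q, (X (T k).2.2 (T k).1 ω * X (T k).2.2 (T k).2.1 ω)
        = ∏ p ∈ Sodd T, X p.1 p.2 ω := by
      intro T ω
      have hfib : ∀ F : Fin q → Fin M × Fin N,
          ∏ k : Fin q, X (F k).1 (F k).2 ω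
          = ∏ p : Fin M × Fin N, X p.1 p.2 ω ^
              (((univ : Finset (Fin q)).filter fun k => F k = p).card) := by
        intro F
        calc ∏ k : Fin q, X (F k).1 (F k).2 ω
            = ∏ p : Fin M × Fin N, ∏ k ∈ (univ : Finset (Fin q)).filter (fun k => F k = p),
                X (F k).1 (F k).2 ω := (Finset.prod_fiberwise univ F _).symm
          _ = ∏ p : Fin M × Fin N, X p.1 p.2 ω ^
              (((univ : Finset (Fin q)).filter fun k => F k = p).card) := by
              refine Finset.prod_congr rfl fun p _ => ?_
              rw [← Finset.prod_const]
              refine Finset.prod_congr rfl fun k hk => ?_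
              rw [(Finset.mem_filter.1 hk).2]
      calc ∏ k : Fin q, (X (T k).2.2 (T k).1 ω * X (T k).2.2 (T k).2.1 ω)
          = (∏ k : Fin q, X (T k).2.2 (T k).1 ω) *
              ∏ k : Fin q, X (T k).2.2 (T k).2.1 ω := Finset.prod_mul_distrib
        _ = (∏ p : Fin M × Fin N, X p.1 p.2 ω ^
              (((univ : Finset (Fin q)).filter fun k => ((T k).2.2, (T k).1) = p).card)) *
            ∏ p : Fin M × Fin N, X p.1 p.2 ω ^
              (((univ : Finset (Fin q)).filter fun k => ((T k).2.2, (T k).2.1) = p).card) := by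
            rw [hfib (fun k => ((T k).2.2, (T k).1)), hfib (fun k => ((T k).2.2, (T k).2.1))]
        _ = ∏ p : Fin M × Fin N, X p.1 p.2 ω ^
              ((((univ : Finset (Fin q)).filter fun k => ((T k).2.2, (T k).1) = p).card) +
               (((univ : Finset (Fin q)).filter fun k => ((T k).2.2, (T k).2.1) = p).card)) := by
            rw [← Finset.prod_mul_distrib]
            exact Finset.prod_congr rfl fun p _ => (pow_add _ _ _).symm
        _ = ∏ p : Fin M × Fin N,
              (if Even ((((univ : Finset (Fin q)).filter
                  fun k => ((T k).2.2, (T k).1) = p).card) +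
                (((univ : Finset (Fin q)).filter fun k => ((T k).2.2, (T k).2.1) = p).card))
               then 1 else X p.1 p.2 ω) := by
            refine Finset.prod_congr rfl fun p _ => ?_
            rcases hpm p.1 p.2 ω with h | h
            · rw [h, one_pow]
              by_cases he : Even ((((univ : Finset (Fin q)).filter
                  fun k => ((T k).2.2, (T k).1) = p).card) +
                (((univ : Finset (Fin q)).filter fun k => ((T k).2.2, (T k).2.1) = p).card))
              · rw [if_pos he]
              · rw [if_neg he]
            · rw [h]
              by_cases he : Even ((((univ : Finset (Fin q)).filter
                  fun k => ((T k).2.2, (T k).1) = p).card) +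
                (((univ : Finset (Fin q)).filter fun k => ((T k).2.2, (T k).2.1) = p).card))
              · rw [if_pos he, he.neg_one_pow]
              · rw [if_neg he, (Nat.not_even_iff_odd.1 he).neg_one_pow]
        _ = ∏ p ∈ Sodd T, X p.1 p.2 ω := by
            rw [hSodd]
            rw [Finset.prod_ite, Finset.prod_const_one, one_mul]
    have hval1 : ∀ T, Sodd T = ∅ →
        ∫ ω, ∏ k : Fin q, (X (T k).2.2 (T k).1 ω * X (T k).2.2 (T k).2.1 ω) ∂μ = 1 := by
      intro T hS
      have he : (fun ω => ∏ k : Fin q, (X (T k).2.2 (T k).1 ω * X (T k).2.2 (T k).2.1 ω))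
          = fun ω => ∏ p ∈ Sodd T, X p.1 p.2 ω := funext (hkey T)
      rw [he, hS]
      simp
    have hval2 : ∀ T, Sodd T ≠ ∅ →
        |∫ ω, ∏ k : Fin q, (X (T k).2.2 (T k).1 ω * X (T k).2.2 (T k).2.1 ω) ∂μ| ≤ ε := by
      intro T hS
      have he : (fun ω => ∏ k : Fin q, (X (T k).2.2 (T k).1 ω * X (T k).2.2 (T k).2.1 ω))
          = fun ω => ∏ p ∈ Sodd T, X p.1 p.2 ω := funext (hkey T)
      rw [he]
      exact hbias (Sodd T) (Finset.nonempty_iff_ne_empty.2 hS)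
    have hsubE : PT.filter (fun T => Sodd T = ∅) ⊆ PT.filter Ev := by
      intro T hT
      obtain ⟨hTD, hS⟩ := Finset.mem_filter.1 hT
      have hTD' : ∀ k, (T k).1 ∈ I ∧ (T k).2.1 ∈ J := by
        intro k
        have hmem := Fintype.mem_piFinset.1 hTD k
        rw [hD, Finset.mem_product, Finset.mem_product] at hmem
        exact ⟨hmem.1, hmem.2.1⟩
      have hor : ∀ p : Fin M × Fin N,
          (((univ : Finset (Fin q)).filter fun k => ((T k).2.2, (T k).1) = p).card = 0) ∨
          (((univ : Finset (Fin q)).filter fun k => ((T k).2.2, (T k).2.1) = p).card = 0) := by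
        intro p
        by_contra hcon
        push_neg at hcon
        obtain ⟨h1, h2⟩ := hcon
        obtain ⟨k1, hk1⟩ := Finset.card_pos.1 (Nat.pos_of_ne_zero h1)
        obtain ⟨k2, hk2⟩ := Finset.card_pos.1 (Nat.pos_of_ne_zero h2)
        have e1 : (T k1).1 = p.2 := congrArg Prod.snd (Finset.mem_filter.1 hk1).2
        have e2 : (T k2).2.1 = p.2 := congrArg Prod.snd (Finset.mem_filter.1 hk2).2
        exact Finset.disjoint_left.1 hdisj (e1 ▸ (hTD' k1).1) (e2 ▸ (hTD' k2).2)
      rw [hSodd] at hS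
      have heven : ∀ p : Fin M × Fin N,
          Even ((((univ : Finset (Fin q)).filter fun k => ((T k).2.2, (T k).1) = p).card) +
            (((univ : Finset (Fin q)).filter fun k => ((T k).2.2, (T k).2.1) = p).card)) := by
        intro p
        have := Finset.filter_eq_empty_iff.1 hS (Finset.mem_univ p)
        exact not_not.1 this
      refine Finset.mem_filter.2 ⟨hTD, ?_, ?_⟩
      · intro p
        rcases hor p with h0 | h0
        · rw [h0]; exact Even.zero
        · have := heven p; rwa [h0, add_zero] at this
      · intro p
        rcases hor p with h0 | h0
        · have := heven p; rwa [h0, zero_add] at this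
        · rw [h0]; exact Even.zero
    have hsum_bound : ∑ T ∈ PT, ∫ ω, ∏ k : Fin q,
        (X (T k).2.2 (T k).1 ω * X (T k).2.2 (T k).2.1 ω) ∂μ
        ≤ ((PT.filter Ev).card : ℝ) + ε * (PT.card : ℝ) := by
      rw [← Finset.sum_filter_add_sum_filter_not PT (fun T => Sodd T = ∅)]
      have b1 : ∑ T ∈ PT.filter (fun T => Sodd T = ∅), ∫ ω, ∏ k : Fin q,
          (X (T k).2.2 (T k).1 ω * X (T k).2.2 (T k).2.1 ω) ∂μ
          = ((PT.filter (fun T => Sodd T = ∅)).card : ℝ) := by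
        rw [Finset.sum_congr rfl (fun T hT => hval1 T (Finset.mem_filter.1 hT).2),
          Finset.sum_const, nsmul_eq_mul, mul_one]
      have b2 : ∑ T ∈ PT.filter (fun T => ¬ Sodd T = ∅), ∫ ω, ∏ k : Fin q,
          (X (T k).2.2 (T k).1 ω * X (T k).2.2 (T k).2.1 ω) ∂μ ≤ ε * (PT.card : ℝ) := by
        calc ∑ T ∈ PT.filter (fun T => ¬ Sodd T = ∅), ∫ ω, ∏ k : Fin q,
            (X (T k).2.2 (T k).1 ω * X (T k).2.2 (T k).2.1 ω) ∂μ
            ≤ ∑ _T ∈ PT.filter (fun T => ¬ Sodd T = ∅), ε :=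
              Finset.sum_le_sum fun T hT =>
                le_trans (le_abs_self _) (hval2 T (Finset.mem_filter.1 hT).2)
          _ = ((PT.filter (fun T => ¬ Sodd T = ∅)).card : ℝ) * ε := by
              rw [Finset.sum_const, nsmul_eq_mul]
          _ ≤ (PT.card : ℝ) * ε := by
              refine mul_le_mul_of_nonneg_right ?_ hε0
              exact_mod_cast Finset.card_filter_le _ _
          _ = ε * (PT.card : ℝ) := mul_comm _ _
      have b3 : ((PT.filter (fun T => Sodd T = ∅)).card : ℝ) ≤ ((PT.filter Ev).card : ℝ) := by
        exact_mod_cast Finset.card_le_card hsubE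
      rw [b1]
      linarith [b2, b3]
    have hint : ∫ ω, Z ω ^ q ∂μ
        ≤ (((PT.filter Ev).card : ℝ) + ε * (PT.card : ℝ)) / (M:ℝ) ^ q := by
      have h1 : ∫ ω, Z ω ^ q ∂μ = (∑ T ∈ PT, ∫ ω, ∏ k : Fin q,
          (X (T k).2.2 (T k).1 ω * X (T k).2.2 (T k).2.1 ω) ∂μ) / (M:ℝ) ^ q := by
        simp only [hZq]
        rw [integral_div, integral_finset_sum PT (fun T _ => hGint T)]
      rw [h1]
      exact (div_le_div_iff_of_pos_right (pow_pos hMR q)).mpr hsum_bound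
    -- counting bound
    have hN : (PT.filter Ev).card ≤ (q - 1)‼ * (I.card ^ r * J.card ^ r) *
        ∏ t' ∈ Finset.range r, (M + 2 * t') := BFRO.main_count (q := q) hM I J i₀ hi₀ j₀ hj₀
    have hPTcard : PT.card = (I.card * (J.card * M)) ^ q := by
      rw [hPT, Fintype.card_piFinset_const, hD, Finset.card_product, Finset.card_product,
        Finset.card_univ, Fintype.card_fin]
    set A := (I.card : ℝ) with hA
    set B := (J.card : ℝ) with hB
    set PR : ℝ := ((∏ t' ∈ Finset.range r, (M + 2 * t') : ℕ) : ℝ) with hPR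
    have hPRpos : 0 < PR := by
      rw [hPR]
      have : 0 < ∏ t' ∈ Finset.range r, (M + 2 * t') :=
        Finset.prod_pos fun t' _ => by omega
      exact_mod_cast this
    have hNR : ((PT.filter Ev).card : ℝ) ≤ ((q - 1)‼ : ℝ) * (A ^ r * B ^ r) * PR := by
      rw [hA, hB, hPR]
      exact_mod_cast hN
    have htpow : t ^ q = θ ^ q * (A ^ r * B ^ r) := by
      rw [htdef, mul_pow]
      congr 1
      rw [← h2r, pow_mul, Real.sq_sqrt hab.le, mul_pow]
    have hdf1 : (M - 2)‼ * ∏ t' ∈ Finset.range r, (M + 2 * t') = (M + q - 2)‼ := by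
      rw [BFRO.dfact_prod M hM2 r]
      congr 1
      omega
    have hMq2 : ((M + q - 2)‼ : ℝ) = ((M - 2)‼ : ℝ) * PR := by
      rw [hPR, ← Nat.cast_mul, hdf1]
    have hdfM2pos : (0:ℝ) < ((M - 2)‼ : ℝ) := by
      exact_mod_cast Nat.doubleFactorial_pos _
    have hden1 : (0:ℝ) < (M:ℝ) ^ q * t ^ q := mul_pos (pow_pos hMR q) htq
    have hden2 : (0:ℝ) < ((M:ℝ) * θ) ^ q * ((M - 2)‼ : ℝ) :=
      mul_pos (pow_pos (mul_pos hMR hθ) q) hdfM2pos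
    have hμ3 : (μ {ω | t < |Z ω|}).toReal
        ≤ ((((PT.filter Ev).card : ℝ) + ε * (PT.card : ℝ)) / (M:ℝ) ^ q) / t ^ q :=
      le_trans (hμ1.trans hμ2) ((div_le_div_iff_of_pos_right htq).mpr hint)
    refine hμ3.trans ?_
    rw [div_div, add_div]
    have e1 : (((PT.filter Ev).card : ℝ)) / ((M:ℝ) ^ q * t ^ q)
        ≤ ((q - 1)‼ : ℝ) * ((M + q - 2)‼ : ℝ) / (((M:ℝ) * θ) ^ q * ((M - 2)‼ : ℝ)) := by
      have heq : ((q - 1)‼ : ℝ) * ((M + q - 2)‼ : ℝ) / (((M:ℝ) * θ) ^ q * ((M - 2)‼ : ℝ))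
          = ((q - 1)‼ : ℝ) * (A ^ r * B ^ r) * PR / ((M:ℝ) ^ q * t ^ q) := by
        rw [div_eq_div_iff hden2.ne' hden1.ne', hMq2, htpow, mul_pow]
        ring
      rw [heq]
      exact (div_le_div_iff_of_pos_right hden1).mpr hNR
    have e2 : ε * (PT.card : ℝ) / ((M:ℝ) ^ q * t ^ q) = ε * (A * B) ^ r / θ ^ q := by
      have hPTR : (PT.card : ℝ) = (A * (B * (M:ℝ))) ^ q := by
        rw [hPTcard, hA, hB]
        push_cast
        ring
      have hq_rr : r + r = q := by omega
      have hexp : (A * (B * (M:ℝ))) ^ q = ((A * B) ^ r * (A * B) ^ r) * (M:ℝ) ^ q := by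
        rw [show A * (B * (M:ℝ)) = (A * B) * (M:ℝ) by ring, mul_pow, ← hq_rr, pow_add]
      rw [hPTR, div_eq_div_iff hden1.ne' (pow_pos hθ q).ne', hexp, htpow, mul_pow A B r]
      ring
    rw [e2]
    exact add_le_add e1 (le_refl _)
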